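/- Under hypotheses (H1)–(H5), for every saddle point p and every unstable separatrix l of p, exactly one of the following two alternatives holds: (a) there exists a saddle point σ such that cl(l) \ (l ∪ {p}) = {σ} and l is a stable separatrix of σ; (b) there exists a sink ω such that cl(l) \ (l ∪ {p}) = {ω} and l ⊆ W^s_ω. -/

import Mathlib

open Set Filter Topology

variable {M : Type*}

/-- The set of fixed points of the flow `φ`. -/
def FixedPts [TopologicalSpace M] (φ : Flow ℝ M) : Set M :=
  {p | ∀ t : ℝ, φ t p = p}

/-- The stable set `W^s_p` of a point `p`: points whose trajectory tends to `p` as `t → +∞`. -/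
def Ws [TopologicalSpace M] (φ : Flow ℝ M) (p : M) : Set M :=
  {x | Tendsto (fun t : ℝ => φ t x) atTop (𝓝 p)}

/-- The unstable set `W^u_p` of a point `p`: points whose trajectory tends to `p` as `t → -∞`. -/
def Wu [TopologicalSpace M] (φ : Flow ℝ M) (p : M) : Set M :=
  {x | Tendsto (fun t : ℝ => φ t x) atBot (𝓝 p)}

/-- The linear model flow `t ↦ (2^(e₁ t) x, 2^(e₂ t) y)` on `ℝ²`.
`linFlow (-1) (-1)` is the model sink `a^t`, `linFlow (-1) 1` the model saddle `b^t`,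
`linFlow 1 1` the model source `c^t`. -/
noncomputable def linFlow (e₁ e₂ : ℝ) : ℝ → ℝ × ℝ → ℝ × ℝ :=
  fun t q => ((2 : ℝ) ^ (e₁ * t) * q.1, (2 : ℝ) ^ (e₂ * t) * q.2)

/-- The flow `φ` is, in a neighbourhood of `p`, topologically equivalent to the model flow `ψ`
on `ℝ²`: there is a homeomorphism from an open neighbourhood of `p` onto an open neighbourhood
of the origin, sending `p` to the origin, and mapping arcs of trajectories of `φ` onto arcs of
trajectories of `ψ` preserving the time direction (via a continuous strictly increasing
reparametrisation of time). -/
def LocallyEquivAt [TopologicalSpace M] (φ : Flow ℝ M) (p : M)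
    (ψ : ℝ → ℝ × ℝ → ℝ × ℝ) : Prop :=
  ∃ h : PartialHomeomorph M (ℝ × ℝ),
    p ∈ h.source ∧ (0 : ℝ × ℝ) ∈ h.target ∧ h p = 0 ∧
    ∀ x ∈ h.source, ∃ τ : ℝ → ℝ, Continuous τ ∧ StrictMono τ ∧ τ 0 = 0 ∧
      ∀ t : ℝ, (∀ s ∈ Set.uIcc (0 : ℝ) t, φ s x ∈ h.source) →
        h (φ t x) = ψ (τ t) (h x)

/-- `l` is an unstable separatrix of `σ`: a connected component of `W^u_σ \ {σ}`. -/
def IsUnstableSeparatrix [TopologicalSpace M] (φ : Flow ℝ M) (σ : M) (l : Set M) : Prop :=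
  ∃ x ∈ Wu φ σ \ {σ}, l = connectedComponentIn (Wu φ σ \ {σ}) x

/-- `l` is a stable separatrix of `σ`: a connected component of `W^s_σ \ {σ}`. -/
def IsStableSeparatrix [TopologicalSpace M] (φ : Flow ℝ M) (σ : M) (l : Set M) : Prop :=
  ∃ x ∈ Ws φ σ \ {σ}, l = connectedComponentIn (Ws φ σ \ {σ}) x

/-! ### Auxiliary real-line lemmas -/

namespace SepAux

lemma core_range {g : ℝ → ℝ} {c : ℝ} (hgc : Continuous g) (hmono : StrictMono g)
    (hlim : Tendsto g atBot (𝓝 c))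
    (hS : ∀ S, Tendsto g atTop (𝓝 S) → S = c) :
    range g = Ioi c := by
  have hle : ∀ t, c ≤ g t := by
    intro t
    refine le_of_tendsto hlim ?_
    filter_upwards [eventually_le_atBot t] with s hs
    exact hmono.monotone hs
  have hlt : ∀ t, c < g t := by
    intro t
    rcases lt_or_eq_of_le (hle t) with h | h
    · exact h
    · exfalso
      have h1 := hmono (show t - 1 < t by linarith)
      have h2 := hle (t - 1)
      rw [← h] at h1
      linarith
  apply Subset.antisymm
  · rintro r ⟨t, rfl⟩; exact hlt t
  · rintro r (hr : c < r)
    obtain ⟨t0, ht0⟩ := (hlim.eventually_lt_const hr).exists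
    have h1 : ∃ t1, r < g t1 := by
      by_contra hcon
      push_neg at hcon
      have hbdd : BddAbove (range g) := ⟨r, by rintro y ⟨t, rfl⟩; exact hcon t⟩
      have htend := tendsto_atTop_ciSup hmono.monotone hbdd
      have hSc := hS _ htend
      have hle0 : g t0 ≤ ⨆ t, g t := le_ciSup hbdd t0
      rw [hSc] at hle0
      exact absurd hle0 (not_le.mpr (hlt t0))
    obtain ⟨t1, ht1⟩ := h1
    have ht01 : t0 ≤ t1 := le_of_lt (hmono.lt_iff_lt.mp (ht0.trans ht1))
    obtain ⟨t, _, ht⟩ := intermediate_value_Icc ht01 hgc.continuousOn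
      (⟨le_of_lt ht0, le_of_lt ht1⟩ : r ∈ Icc (g t0) (g t1))
    exact ⟨t, ht⟩

lemma ccIn_compl_singleton_gt {c u : ℝ} (h : c < u) :
    connectedComponentIn ({c}ᶜ : Set ℝ) u = Ioi c := by
  apply Subset.antisymm
  · intro v hv
    by_contra hvc
    simp only [mem_Ioi, not_lt] at hvc
    have hoc := (isPreconnected_connectedComponentIn
      (x := u) (F := ({c}ᶜ : Set ℝ))).ordConnected
    have hu : u ∈ connectedComponentIn ({c}ᶜ : Set ℝ) u :=
      mem_connectedComponentIn (by simp [h.ne'])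
    have hc := hoc.out hv hu (⟨hvc, le_of_lt h⟩ : c ∈ Icc v u)
    exact (connectedComponentIn_subset _ _ hc) rfl
  · exact isPreconnected_Ioi.subset_connectedComponentIn h
      (fun y hy => by simpa using hy.ne')

lemma ccIn_compl_singleton_lt {c u : ℝ} (h : u < c) :
    connectedComponentIn ({c}ᶜ : Set ℝ) u = Iio c := by
  apply Subset.antisymm
  · intro v hv
    by_contra hvc
    simp only [mem_Iio, not_lt] at hvc
    have hoc := (isPreconnected_connectedComponentIn
      (x := u) (F := ({c}ᶜ : Set ℝ))).ordConnected
    have hu : u ∈ connectedComponentIn ({c}ᶜ : Set ℝ) u :=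
      mem_connectedComponentIn (by simp [ne_of_lt h])
    have hc := hoc.out hu hv (⟨le_of_lt h, hvc⟩ : c ∈ Icc u v)
    exact (connectedComponentIn_subset _ _ hc) rfl
  · exact isPreconnected_Iio.subset_connectedComponentIn h
      (fun y hy => by simpa using ne_of_lt hy)

lemma key_range_atBot {g : ℝ → ℝ} {c : ℝ} (hg : Continuous g)
    (hinj : Function.Injective g) (hlim : Tendsto g atBot (𝓝 c))
    (hS : ∀ S, Tendsto g atTop (𝓝 S) → S = c) :
    range g = connectedComponentIn ({c}ᶜ : Set ℝ) (g 0) := by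
  rcases hg.strictMono_of_inj hinj with hmono | hanti
  · have hr := core_range hg hmono hlim hS
    have h0 : c < g 0 := by
      have : g 0 ∈ range g := ⟨0, rfl⟩
      rw [hr] at this; exact this
    rw [hr, ccIn_compl_singleton_gt h0]
  · set h : ℝ → ℝ := fun t => -(g t) with hh
    have hhc : Continuous h := hg.neg
    have hhm : StrictMono h := fun a b hab => neg_lt_neg (hanti hab)
    have hhl : Tendsto h atBot (𝓝 (-c)) := hlim.neg
    have hhS : ∀ S, Tendsto h atTop (𝓝 S) → S = -c := by
      intro S hT
      have : Tendsto g atTop (𝓝 (-S)) := by simpa [hh] using hT.neg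
      have := hS _ this
      linarith
    have hr := core_range hhc hhm hhl hhS
    have hrange : range g = Iio c := by
      ext r
      constructor
      · rintro ⟨t, rfl⟩
        have h1 : h t ∈ Ioi (-c) := hr ▸ ⟨t, rfl⟩
        simp only [hh, mem_Ioi] at h1
        exact mem_Iio.mpr (by linarith)
      · intro hrc
        have : -r ∈ Ioi (-c) := by simpa using hrc
        rw [← hr] at this
        obtain ⟨t, ht⟩ := this
        exact ⟨t, by have : -(g t) = -r := ht; linarith⟩
    have h0 : g 0 < c := by
      have : g 0 ∈ range g := ⟨0, rfl⟩
      rw [hrange] at this; exact this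
    rw [hrange, ccIn_compl_singleton_lt h0]

lemma key_range {g : ℝ → ℝ} {c : ℝ} (hg : Continuous g) (hinj : Function.Injective g)
    {l0 : Filter ℝ} (hl0 : l0 = atTop ∨ l0 = atBot) (hlim : Tendsto g l0 (𝓝 c))
    (hS : ∀ l' : Filter ℝ, (l' = atTop ∨ l' = atBot) → ∀ S, Tendsto g l' (𝓝 S) → S = c) :
    range g = connectedComponentIn ({c}ᶜ : Set ℝ) (g 0) := by
  rcases hl0 with rfl | rfl
  · set g' : ℝ → ℝ := fun t => g (-t) with hg'
    have hrange : range g' = range g := by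
      apply Subset.antisymm
      · rintro r ⟨t, rfl⟩; exact ⟨-t, rfl⟩
      · rintro r ⟨t, rfl⟩; exact ⟨-t, by simp [hg']⟩
    have h0 : g' 0 = g 0 := by simp [hg']
    have hg'c : Continuous g' := hg.comp continuous_neg
    have hg'inj : Function.Injective g' := by
      intro a b hab
      have := hinj hab
      linarith
    have hlim' : Tendsto g' atBot (𝓝 c) := hlim.comp tendsto_neg_atBot_atTop
    have hS' : ∀ S, Tendsto g' atTop (𝓝 S) → S = c := by
      intro S hT
      refine hS atBot (Or.inr rfl) S ?_
      have h2 : Tendsto (fun t : ℝ => g' (-t)) atBot (𝓝 S) := hT.comp tendsto_neg_atBot_atTop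
      simpa [hg'] using h2
    rw [← hrange, ← h0]
    exact key_range_atBot hg'c hg'inj hlim' hS'
  · exact key_range_atBot hg hinj hlim (hS atTop (Or.inl rfl))

lemma no_double_limit {g : ℝ → ℝ} {c : ℝ} (hg : Continuous g)
    (hinj : Function.Injective g)
    (h1 : Tendsto g atTop (𝓝 c)) (h2 : Tendsto g atBot (𝓝 c)) : False := by
  have key : ∀ t : ℝ, g t = c := by
    rcases hg.strictMono_of_inj hinj with hmono | hanti
    · intro t
      have hle : g t ≤ c := by
        refine ge_of_tendsto h1 ?_
        filter_upwards [eventually_ge_atTop t] with s hs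
        exact hmono.monotone hs
      have hge : c ≤ g t := by
        refine le_of_tendsto h2 ?_
        filter_upwards [eventually_le_atBot t] with s hs
        exact hmono.monotone hs
      linarith
    · intro t
      have hle : c ≤ g t := by
        refine le_of_tendsto h1 ?_
        filter_upwards [eventually_ge_atTop t] with s hs
        exact hanti.antitone hs
      have hge : g t ≤ c := by
        refine ge_of_tendsto h2 ?_
        filter_upwards [eventually_le_atBot t] with s hs
        exact hanti.antitone hs
      linarith
  have : (0 : ℝ) = 1 := hinj (by rw [key 0, key 1])
  norm_num at this

/-! ### Flow lemmas -/

variable [TopologicalSpace M]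

lemma orbit_cont (φ : Flow ℝ M) (x : M) : Continuous fun t : ℝ => φ t x :=
  φ.continuous continuous_id continuous_const

lemma shift_tendsto {l0 : Filter ℝ} (hl0 : l0 = atTop ∨ l0 = atBot) (s : ℝ) :
    Tendsto (fun t : ℝ => s + t) l0 l0 := by
  rcases hl0 with rfl | rfl
  · exact tendsto_atTop_add_const_left _ s tendsto_id
  · exact tendsto_atBot_add_const_left _ s tendsto_id

lemma neBot_of (l0 : Filter ℝ) (hl0 : l0 = atTop ∨ l0 = atBot) : l0.NeBot := by
  rcases hl0 with rfl | rfl <;> infer_instance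

variable [T2Space M]

lemma fixed_of_tendsto (φ : Flow ℝ M) {x y : M} {l0 : Filter ℝ}
    (hl0 : l0 = atTop ∨ l0 = atBot)
    (h : Tendsto (fun t => φ t x) l0 (𝓝 y)) (s : ℝ) : φ s y = y := by
  haveI := neBot_of l0 hl0
  have h1 : Tendsto (fun t => φ (s + t) x) l0 (𝓝 y) := h.comp (shift_tendsto hl0 s)
  have h2 : Tendsto (fun t => φ s (φ t x)) l0 (𝓝 (φ s y)) :=
    ((φ.continuous_toFun s).tendsto y).comp h
  have he : (fun t => φ (s + t) x) = fun t => φ s (φ t x) :=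
    funext fun t => φ.map_add s t x
  rw [he] at h1
  exact tendsto_nhds_unique h2 h1

lemma mem_Ws_self (φ : Flow ℝ M) {q : M} (hq : q ∈ FixedPts φ) : q ∈ Ws φ q := by
  have : (fun t : ℝ => φ t q) = fun _ => q := funext hq
  show Tendsto (fun t : ℝ => φ t q) atTop (𝓝 q)
  rw [this]; exact tendsto_const_nhds

lemma mem_Wu_self (φ : Flow ℝ M) {q : M} (hq : q ∈ FixedPts φ) : q ∈ Wu φ q := by
  have : (fun t : ℝ => φ t q) = fun _ => q := funext hq
  show Tendsto (fun t : ℝ => φ t q) atBot (𝓝 q)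
  rw [this]; exact tendsto_const_nhds

lemma fixed_mem_Wu (φ : Flow ℝ M) {y p : M} (hy : y ∈ FixedPts φ) (hyW : y ∈ Wu φ p) :
    y = p := by
  have h1 : Tendsto (fun t : ℝ => φ t y) atBot (𝓝 p) := hyW
  have h2 : (fun t : ℝ => φ t y) = fun _ => y := funext hy
  rw [h2] at h1
  exact tendsto_nhds_unique (tendsto_const_nhds) h1

lemma fixed_mem_Ws (φ : Flow ℝ M) {y p : M} (hy : y ∈ FixedPts φ) (hyW : y ∈ Ws φ p) :
    y = p := by
  have h1 : Tendsto (fun t : ℝ => φ t y) atTop (𝓝 p) := hyW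
  have h2 : (fun t : ℝ => φ t y) = fun _ => y := funext hy
  rw [h2] at h1
  exact tendsto_nhds_unique (tendsto_const_nhds) h1

lemma Ws_inv (φ : Flow ℝ M) (s : ℝ) {x q : M} (h : x ∈ Ws φ q) : φ s x ∈ Ws φ q := by
  have h1 : Tendsto (fun t : ℝ => φ (t + s) x) atTop (𝓝 q) :=
    h.comp (tendsto_atTop_add_const_right _ s tendsto_id)
  have he : (fun t : ℝ => φ (t + s) x) = fun t => φ t (φ s x) :=
    funext fun t => φ.map_add t s x
  rw [he] at h1
  exact h1

lemma Wu_inv (φ : Flow ℝ M) (s : ℝ) {x q : M} (h : x ∈ Wu φ q) : φ s x ∈ Wu φ q := by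
  have h1 : Tendsto (fun t : ℝ => φ (t + s) x) atBot (𝓝 q) :=
    h.comp (tendsto_atBot_add_const_right _ s tendsto_id)
  have he : (fun t : ℝ => φ (t + s) x) = fun t => φ t (φ s x) :=
    funext fun t => φ.map_add t s x
  rw [he] at h1
  exact h1

lemma orbit_back (φ : Flow ℝ M) (t : ℝ) (x : M) : φ (-t) (φ t x) = x := by
  rw [← φ.map_add, neg_add_cancel, φ.map_zero_apply]

lemma orbit_inj (φ : Flow ℝ M) {x q : M} (hxq : x ∈ Ws φ q) (hqfix : q ∈ FixedPts φ)
    (hxfix : x ∉ FixedPts φ) : Function.Injective fun t : ℝ => φ t x := by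
  intro a b hab
  have hab' : φ a x = φ b x := hab
  by_contra hne
  have hd : φ (b - a) x = x := by
    calc φ (b - a) x = φ (-a + b) x := by rw [show b - a = -a + b by ring]
    _ = φ (-a) (φ b x) := φ.map_add _ _ _
    _ = φ (-a) (φ a x) := by rw [hab']
    _ = x := orbit_back φ a x
  have hd0 : b - a ≠ 0 := sub_ne_zero.mpr (Ne.symm hne)
  have hper : ∃ d' > 0, φ d' x = x := by
    rcases lt_or_gt_of_ne hd0 with h | h
    · refine ⟨-(b - a), by linarith, ?_⟩
      calc φ (-(b - a)) x = φ (-(b - a)) (φ (b - a) x) := by rw [hd]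
      _ = x := orbit_back φ (b - a) x
    · exact ⟨b - a, h, hd⟩
  obtain ⟨d', hd'pos, hd'⟩ := hper
  have hn : ∀ n : ℕ, φ ((n : ℝ) * d') x = x := by
    intro n
    induction n with
    | zero => simpa using φ.map_zero_apply x
    | succ k ih =>
      have he : ((k + 1 : ℕ) : ℝ) * d' = d' + (k : ℝ) * d' := by push_cast; ring
      rw [he, φ.map_add, ih, hd']
  have htend : Tendsto (fun n : ℕ => ((n : ℝ) * d')) atTop atTop :=
    Tendsto.atTop_mul_const hd'pos tendsto_natCast_atTop_atTop
  have h1 : Tendsto (fun n : ℕ => φ ((n : ℝ) * d') x) atTop (𝓝 q) := hxq.comp htend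
  have h2 : (fun n : ℕ => φ ((n : ℝ) * d') x) = fun _ => x := funext hn
  rw [h2] at h1
  have hxqeq : x = q := tendsto_nhds_unique tendsto_const_nhds h1
  exact hxfix (by rw [hxqeq]; exact hqfix)

/-! ### The main structural lemma: separatrices are single orbits -/

lemma component_eq_orbit (φ : Flow ℝ M)
    {W : Set M} {p0 x : M} (e : ↥W ≃ₜ ℝ)
    (hp0W : p0 ∈ W) (hp0fix : ∀ t : ℝ, φ t p0 = p0)
    (hinv : ∀ t : ℝ, MapsTo (φ t) W W)
    (hfixW : ∀ y ∈ W, (∀ t : ℝ, φ t y = y) → y = p0)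
    (hxW : x ∈ W) (hxp : x ≠ p0)
    (hinj : Function.Injective fun t : ℝ => φ t x)
    {l0 : Filter ℝ} (hl0 : l0 = atTop ∨ l0 = atBot)
    (hlim : Tendsto (fun t => φ t x) l0 (𝓝 p0)) :
    connectedComponentIn (W \ {p0}) x = range fun t : ℝ => φ t x := by
  haveI := neBot_of l0 hl0
  set G : ℝ → ↥W := fun t => ⟨φ t x, hinv t hxW⟩ with hG
  set g : ℝ → ℝ := fun t => e (G t) with hg
  set c : ℝ := e ⟨p0, hp0W⟩ with hc
  have hgcont : Continuous g := e.continuous.comp ((orbit_cont φ x).subtype_mk _)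
  have hginj : Function.Injective g := fun a b hab =>
    hinj (congrArg Subtype.val (e.injective hab))
  have hglim : Tendsto g l0 (𝓝 c) :=
    (e.continuous.tendsto _).comp (tendsto_subtype_rng.mpr hlim)
  have hS : ∀ l' : Filter ℝ, (l' = atTop ∨ l' = atBot) → ∀ S,
      Tendsto g l' (𝓝 S) → S = c := by
    intro l' hl' S hT
    haveI := neBot_of l' hl'
    have hGT : Tendsto G l' (𝓝 (e.symm S)) :=
      ((e.symm.continuous.tendsto S).comp hT).congr fun t => e.symm_apply_apply (G t)
    have hvalT : Tendsto (fun t => φ t x) l' (𝓝 ((e.symm S : ↥W) : M)) :=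
      tendsto_subtype_rng.mp hGT
    have hfix := fixed_of_tendsto φ hl' hvalT
    have h3 : ((e.symm S : ↥W) : M) = p0 := hfixW _ (e.symm S).2 hfix
    have h4 : e.symm S = (⟨p0, hp0W⟩ : ↥W) := Subtype.ext h3
    calc S = e (e.symm S) := (e.apply_symm_apply S).symm
    _ = c := by rw [h4]
  have hkey := key_range hgcont hginj hl0 hglim hS
  have hg0 : g 0 = e ⟨x, hxW⟩ := congrArg e (Subtype.ext (φ.map_zero_apply x))
  have hgtc : ∀ t, φ t x ≠ p0 := by
    intro t h
    apply hxp
    calc x = φ (-t) (φ t x) := (orbit_back φ t x).symm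
    _ = φ (-t) p0 := by rw [h]
    _ = p0 := hp0fix _
  apply Subset.antisymm
  · -- component ⊆ orbit
    set C := connectedComponentIn (W \ {p0}) x with hC
    have hCsub : C ⊆ W \ {p0} := connectedComponentIn_subset _ _
    have hCW : C ⊆ W := fun y hy => (hCsub hy).1
    have hCpre : IsPreconnected C := isPreconnected_connectedComponentIn
    set C' : Set ↥W := Subtype.val ⁻¹' C with hC'
    have himg : Subtype.val '' C' = C := by
      apply Subset.antisymm
      · rintro y ⟨w, hw, rfl⟩; exact hw
      · intro y hy; exact ⟨⟨y, hCW hy⟩, hy, rfl⟩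
    have hC'pre : IsPreconnected C' := by
      rw [← Topology.IsInducing.subtypeVal.isPreconnected_image (s := C')]
      rwa [himg]
    set D : Set ℝ := e '' C' with hD
    have hDpre : IsPreconnected D := hC'pre.image _ e.continuous.continuousOn
    have hxC : x ∈ C := mem_connectedComponentIn ⟨hxW, hxp⟩
    have hg0D : g 0 ∈ D := by
      rw [hg0]
      exact ⟨⟨x, hxW⟩, hxC, rfl⟩
    have hDsub : D ⊆ ({c}ᶜ : Set ℝ) := by
      rintro r ⟨w, hwC', rfl⟩
      intro hr
      have hwc : e w = c := hr
      have : w = (⟨p0, hp0W⟩ : ↥W) := e.injective hwc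
      rw [this] at hwC'
      exact (hCsub hwC').2 rfl
    have hDcc : D ⊆ connectedComponentIn ({c}ᶜ : Set ℝ) (g 0) :=
      hDpre.subset_connectedComponentIn hg0D hDsub
    rw [← hkey] at hDcc
    intro y hyC
    have hyW : y ∈ W := hCW hyC
    have hyD : e ⟨y, hyW⟩ ∈ D := ⟨⟨y, hyW⟩, hyC, rfl⟩
    obtain ⟨t, ht⟩ := hDcc hyD
    have : G t = (⟨y, hyW⟩ : ↥W) := e.injective ht
    exact ⟨t, congrArg Subtype.val this⟩
  · -- orbit ⊆ component
    apply IsPreconnected.subset_connectedComponentIn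
      (isPreconnected_range (orbit_cont φ x)) ⟨0, φ.map_zero_apply x⟩
    rintro y ⟨t, rfl⟩
    exact ⟨hinv t hxW, hgtc t⟩

lemma no_homoclinic (φ : Flow ℝ M) {W : Set M} {p0 x : M}
    (e : ↥W ≃ₜ ℝ) (hinv : ∀ t : ℝ, MapsTo (φ t) W W) (hxW : x ∈ W) (hp0W : p0 ∈ W)
    (hinj : Function.Injective fun t : ℝ => φ t x)
    (h1 : Tendsto (fun t => φ t x) atTop (𝓝 p0))
    (h2 : Tendsto (fun t => φ t x) atBot (𝓝 p0)) : False := by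
  set G : ℝ → ↥W := fun t => ⟨φ t x, hinv t hxW⟩ with hG
  set g : ℝ → ℝ := fun t => e (G t) with hg
  have hgc : Continuous g := e.continuous.comp ((orbit_cont φ x).subtype_mk _)
  have hginj : Function.Injective g := fun a b hab =>
    hinj (congrArg Subtype.val (e.injective hab))
  have hT : Tendsto g atTop (𝓝 (e ⟨p0, hp0W⟩)) :=
    (e.continuous.tendsto _).comp (tendsto_subtype_rng.mpr h1)
  have hB : Tendsto g atBot (𝓝 (e ⟨p0, hp0W⟩)) :=
    (e.continuous.tendsto _).comp (tendsto_subtype_rng.mpr h2)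
  exact no_double_limit hgc hginj hT hB

lemma closure_orbit_diff (φ : Flow ℝ M) {x p q : M}
    (hp : Tendsto (fun t : ℝ => φ t x) atBot (𝓝 p))
    (hq : Tendsto (fun t : ℝ => φ t x) atTop (𝓝 q))
    (hqp : q ≠ p) (hql : q ∉ range fun t : ℝ => φ t x) :
    closure (range fun t : ℝ => φ t x) \ ((range fun t : ℝ => φ t x) ∪ {p}) = {q} := by
  apply Subset.antisymm
  · rintro y ⟨hycl, hyn⟩
    simp only [mem_union, mem_singleton_iff, not_or] at hyn
    obtain ⟨hyl, hyp⟩ := hyn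
    by_contra hyq
    simp only [mem_singleton_iff] at hyq
    obtain ⟨Vp, Up, hVpo, hUpo, hyVp, hpUp, hdp⟩ := t2_separation hyp
    obtain ⟨Vq, Uq, hVqo, hUqo, hyVq, hqUq, hdq⟩ := t2_separation hyq
    obtain ⟨Tb, hTb⟩ := (hq.eventually (hUqo.mem_nhds hqUq)).exists_forall_of_atTop
    obtain ⟨Ta, hTa⟩ := (hp.eventually (hUpo.mem_nhds hpUp)).exists_forall_of_atBot
    set A := min Ta Tb with hA
    set B := max Ta Tb with hB
    set K := (fun t : ℝ => φ t x) '' Icc A B with hK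
    have hKc : IsCompact K := isCompact_Icc.image (orbit_cont φ x)
    have hyK : y ∉ K := by
      intro h
      obtain ⟨t, _, rfl⟩ := h
      exact hyl ⟨t, rfl⟩
    set N := Vp ∩ Vq ∩ Kᶜ with hN
    have hNo : IsOpen N := (hVpo.inter hVqo).inter hKc.isClosed.isOpen_compl
    have hyN : y ∈ N := ⟨⟨hyVp, hyVq⟩, hyK⟩
    obtain ⟨z, hzN, hzl⟩ := mem_closure_iff.mp hycl N hNo hyN
    obtain ⟨t, rfl⟩ := hzl
    rcases le_total t A with h | h
    · have hUp : φ t x ∈ Up := hTa t (h.trans (min_le_left _ _))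
      exact absurd hUp (disjoint_left.mp hdp hzN.1.1)
    rcases le_total t B with h' | h'
    · exact hzN.2 ⟨t, ⟨h, h'⟩, rfl⟩
    · have hUq : φ t x ∈ Uq := hTb t ((le_max_right _ _).trans h')
      exact absurd hUq (disjoint_left.mp hdq hzN.1.2)
  · intro y hy
    simp only [mem_singleton_iff] at hy
    subst hy
    refine ⟨mem_closure_of_tendsto hq (Eventually.of_forall fun t => ⟨t, rfl⟩), ?_⟩
    simp only [mem_union, mem_singleton_iff, not_or]
    exact ⟨hql, hqp⟩

end SepAux

open SepAux

/-- Lemma (i) of `ZamykanieBezVsego`: for a saddle p and an unstable separatrix l of p,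
exactly one of: (a) there is a saddle σ with cl(l) \ (l ∪ {p}) = {σ} and l a stable
separatrix of σ; (b) there is a sink ω with cl(l) \ (l ∪ {p}) = {ω} and l ⊆ W^s_ω. -/
theorem unstable_separatrix_closure_alternative
    [TopologicalSpace M] [T2Space M] [CompactSpace M] [ConnectedSpace M]
    [ChartedSpace (EuclideanSpace ℝ (Fin 2)) M]
    (φ : Flow ℝ M) (ind : M → ℕ)
    (hfin : (FixedPts φ).Finite)
    (H1u : ∀ x : M, ∃ p ∈ FixedPts φ, x ∈ Wu φ p)
    (H1s : ∀ x : M, ∃ p ∈ FixedPts φ, x ∈ Ws φ p)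
    (H2 : ∀ p ∈ FixedPts φ, ind p ≤ 2 ∧
      Nonempty (↥(Wu φ p) ≃ₜ EuclideanSpace ℝ (Fin (ind p))) ∧
      Nonempty (↥(Ws φ p) ≃ₜ EuclideanSpace ℝ (Fin (2 - ind p))))
    (H3 : ∀ x ∉ FixedPts φ, ∃ U : Set M, IsOpen U ∧ x ∈ U ∧
      ∃ T > (0 : ℝ), ∀ t ≥ T, Disjoint ((fun y => φ t y) '' U) U)
    (H4 : ∀ p ∈ FixedPts φ,
      (ind p = 0 → LocallyEquivAt φ p (linFlow (-1) (-1))) ∧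
      (ind p = 1 → LocallyEquivAt φ p (linFlow (-1) 1)) ∧
      (ind p = 2 → LocallyEquivAt φ p (linFlow 1 1)))
    (H5 : ∃ σ ∈ FixedPts φ, ind σ = 1)
    :
    ∀ p ∈ FixedPts φ, ind p = 1 →
      ∀ l : Set M, IsUnstableSeparatrix φ p l →
        Xor'
          (∃ σ ∈ FixedPts φ, ind σ = 1 ∧
            closure l \ (l ∪ {p}) = {σ} ∧ IsStableSeparatrix φ σ l)
          (∃ ω ∈ FixedPts φ, ind ω = 0 ∧
            closure l \ (l ∪ {p}) = {ω} ∧ l ⊆ Ws φ ω) := by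
  intro p hp hip l hl
  obtain ⟨x, hx, hleq⟩ := hl
  obtain ⟨hxWu, hxp'⟩ := hx
  have hxp : x ≠ p := fun h => hxp' (by simp [h])
  have hxnotfix : x ∉ FixedPts φ := fun hf => hxp (fixed_mem_Wu φ hf hxWu)
  obtain ⟨q, hqfix, hxq⟩ := H1s x
  have hinj : Function.Injective fun t : ℝ => φ t x := orbit_inj φ hxq hqfix hxnotfix
  obtain ⟨-, hWu2, -⟩ := H2 p hp
  rw [hip] at hWu2
  obtain ⟨eu0⟩ := hWu2
  have e1 : EuclideanSpace ℝ (Fin 1) ≃ₜ ℝ :=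
    (EuclideanSpace.equiv (Fin 1) ℝ).toHomeomorph.trans (Homeomorph.funUnique (Fin 1) ℝ)
  let eu : ↥(Wu φ p) ≃ₜ ℝ := eu0.trans e1
  have hpWu : p ∈ Wu φ p := mem_Wu_self φ hp
  have hWuinv : ∀ t : ℝ, MapsTo (φ t) (Wu φ p) (Wu φ p) := fun t y hy => Wu_inv φ t hy
  have hWufix : ∀ y ∈ Wu φ p, (∀ t : ℝ, φ t y = y) → y = p :=
    fun y hy hfy => fixed_mem_Wu φ hfy hy
  have horb : connectedComponentIn (Wu φ p \ {p}) x = range fun t : ℝ => φ t x :=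
    component_eq_orbit φ eu hpWu hp hWuinv hWufix hxWu hxp hinj (Or.inr rfl) hxWu
  have hl' : l = range fun t : ℝ => φ t x := hleq.trans horb
  have hqp : q ≠ p := by
    intro h
    subst h
    exact no_homoclinic φ eu hWuinv hxWu hpWu hinj hxq hxWu
  have hxq' : x ≠ q := fun h => hxnotfix (h ▸ hqfix)
  have hqorb : q ∉ range fun t : ℝ => φ t x := by
    rintro ⟨t, ht⟩
    apply hxq'
    calc x = φ (-t) (φ t x) := (orbit_back φ t x).symm
    _ = φ (-t) q := by rw [show φ t x = q from ht]
    _ = q := hqfix (-t)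
  have hclos : closure l \ (l ∪ {p}) = {q} := by
    rw [hl']
    exact closure_orbit_diff φ hxWu hxq hqp hqorb
  obtain ⟨hiq2, -, hWsq⟩ := H2 q hqfix
  have hqWs : q ∈ Ws φ q := mem_Ws_self φ hqfix
  have hiqne : ind q ≠ 2 := by
    intro h2
    rw [h2, show (2 - 2 : ℕ) = 0 from rfl] at hWsq
    obtain ⟨es⟩ := hWsq
    haveI : Subsingleton (EuclideanSpace ℝ (Fin 0)) :=
      ⟨fun a b => (EuclideanSpace.equiv (Fin 0) ℝ).injective (Subsingleton.elim _ _)⟩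
    have : (⟨x, hxq⟩ : ↥(Ws φ q)) = ⟨q, hqWs⟩ := es.injective (Subsingleton.elim _ _)
    exact hxq' (congrArg Subtype.val this)
  have hWsinv : ∀ t : ℝ, MapsTo (φ t) (Ws φ q) (Ws φ q) := fun t y hy => Ws_inv φ t hy
  have hWsfix : ∀ y ∈ Ws φ q, (∀ t : ℝ, φ t y = y) → y = q :=
    fun y hy hfy => fixed_mem_Ws φ hfy hy
  have hcase : ind q = 0 ∨ ind q = 1 := by omega
  rcases hcase with h0 | h1
  · refine Or.inr ⟨⟨q, hqfix, h0, hclos, ?_⟩, ?_⟩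
    · rw [hl']
      rintro y ⟨t, rfl⟩
      exact Ws_inv φ t hxq
    · rintro ⟨σ, hσfix, hσ1, hσclos, -⟩
      rw [hσclos] at hclos
      have : σ = q := singleton_eq_singleton_iff.mp hclos
      rw [this] at hσ1
      omega
  · have hWsq1 : Nonempty (↥(Ws φ q) ≃ₜ EuclideanSpace ℝ (Fin 1)) := by
      rw [h1, show (2 - 1 : ℕ) = 1 from rfl] at hWsq
      exact hWsq
    obtain ⟨es0⟩ := hWsq1
    let es : ↥(Ws φ q) ≃ₜ ℝ := es0.trans e1
    have horb2 : connectedComponentIn (Ws φ q \ {q}) x = range fun t : ℝ => φ t x :=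
      component_eq_orbit φ es hqWs hqfix hWsinv hWsfix hxq hxq' hinj (Or.inl rfl) hxq
    refine Or.inl ⟨⟨q, hqfix, h1, hclos, ⟨x, ⟨hxq, hxq'⟩, hl'.trans horb2.symm⟩⟩, ?_⟩
    rintro ⟨ω, hωfix, hω0, hωclos, -⟩
    rw [hωclos] at hclos
    have : ω = q := singleton_eq_singleton_iff.mp hclos
    rw [this] at hω0
    omega
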